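/- arXiv:math/0102040 — 2 statements merged into one kernel-verified Lean document; each statement's English description precedes it below -/
import Mathlib

section
/- Positive definiteness of the imaginary part of Weyl disk matrices (Lemma 2.8, first claim): Assume Hypotheses 2.1 and 2.2. Let z ∈ ℂ∖ℝ, c ≠ x_0, α boundary data, and M ∈ ℂ^{m×m} with M ∈ D(z, c, x_0, α), i.e. E_c(M) ≤ 0. Then σ(c, x_0, z)·Im(M) > 0 (positive definite). -/
open MeasureTheory Matrix Filter Set
open scoped Matrix.Norms.L2Operator ComplexOrder

noncomputable section

abbrev DMat (m : ℕ) := Matrix (Fin m) (Fin m) ℂ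
abbrev DMat2 (m : ℕ) := Matrix (Fin m ⊕ Fin m) (Fin m ⊕ Fin m) ℂ

/-- The matrix J = [[0, -I],[I, 0]]. -/
def Jm (m : ℕ) : DMat2 m := Matrix.fromBlocks 0 (-1) 1 0

/-- Imaginary part of a square complex matrix: (M - M*)/(2i). -/
def matIm {n : Type*} (M : Matrix n n ℂ) : Matrix n n ℂ :=
  (2 * Complex.I)⁻¹ • (M - Mᴴ)

/-- Dirac-type potential: locally integrable, a.e. self-adjoint. -/
def IsDiracPotential (m : ℕ) (B : ℝ → DMat2 m) : Prop :=
  LocallyIntegrable B volume ∧ ∀ᵐ x : ℝ, (B x).IsHermitian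

/-- `F` is locally absolutely continuous on `S` with a.e. derivative `F'`. -/
def AEDerivOn (m : ℕ) (S : Set ℝ) (F F' : ℝ → DMat m) : Prop :=
  LocallyIntegrableOn F' S volume ∧
    ∀ x ∈ S, ∀ y ∈ S, F y = F x + ∫ t in x..y, F' t

/-- `V` is a locally absolutely continuous solution on `S` of the Riccati equation
`V' + z V² + V B₂₂ V + B₁₂ V + V B₂₁ + B₁₁ + z = 0`. -/
def RiccatiOn (m : ℕ) (B : ℝ → DMat2 m) (z : ℂ) (S : Set ℝ) (V : ℝ → DMat m) : Prop :=
  ∃ V' : ℝ → DMat m, AEDerivOn m S V V' ∧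
    ∀ᵐ x : ℝ, x ∈ S →
      V' x + z • (V x * V x) + V x * (B x).toBlocks₂₂ * V x
        + (B x).toBlocks₁₂ * V x + V x * (B x).toBlocks₂₁ + (B x).toBlocks₁₁
        + z • (1 : DMat m) = 0

/-- Open sector with vertex 0, symmetry axis i·ℝ₊, in the upper half-plane. -/
def sector (ε : ℝ) : Set ℂ := {z : ℂ | ε < z.arg ∧ z.arg < Real.pi - ε}

/-- Column block matrix [I; M]. -/
def colI (m : ℕ) (M : DMat m) : Matrix (Fin m ⊕ Fin m) (Fin m) ℂ := Matrix.fromRows 1 M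

/-- The Weyl disk defining matrix E_c(M). -/
def Ec (m : ℕ) (z : ℂ) (x0 c : ℝ) (Ψ : ℝ → DMat2 m) (M : DMat m) : DMat m :=
  Real.sign ((x0 - c) * z.im) •
    ((Ψ c * colI m M)ᴴ * (Complex.I • Jm m) * (Ψ c * colI m M))

/-- Matrix solutions of the Hamiltonian system J Ψ' = (zA + B) Ψ on ℝ. -/
def IsHamMatSol (m : ℕ) {κ : Type} [Fintype κ] [DecidableEq κ] (A B : ℝ → DMat2 m) (z : ℂ)
    (Ψ : ℝ → Matrix (Fin m ⊕ Fin m) κ ℂ) : Prop :=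
  ∃ Ψ' : ℝ → Matrix (Fin m ⊕ Fin m) κ ℂ,
    LocallyIntegrable Ψ' volume ∧
    (∀ a b : ℝ, Ψ b = Ψ a + ∫ t in a..b, Ψ' t) ∧
    (∀ᵐ x : ℝ, Jm m * Ψ' x = (z • A x + B x) * Ψ x)

/-- Vector solutions of the Hamiltonian system. -/
def IsHamVecSol (m : ℕ) (A B : ℝ → DMat2 m) (z : ℂ)
    (ψ : ℝ → (Fin m ⊕ Fin m) → ℂ) : Prop :=
  ∃ ψ' : ℝ → (Fin m ⊕ Fin m) → ℂ,
    LocallyIntegrable ψ' volume ∧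
    (∀ a b : ℝ, ψ b = ψ a + ∫ t in a..b, ψ' t) ∧
    (∀ᵐ x : ℝ, (Jm m) *ᵥ ψ' x = (z • A x + B x) *ᵥ ψ x)

/-- Hypothesis 2.1. -/
structure Hyp21 (m : ℕ) (A B : ℝ → DMat2 m) : Prop where
  locA : LocallyIntegrable A volume
  locB : LocallyIntegrable B volume
  posA : ∀ᵐ x : ℝ, (A x).PosSemidef
  hermB : ∀ᵐ x : ℝ, (B x).IsHermitian

/-- Atkinson's definiteness Hypothesis 2.2. -/
def Atkinson (m : ℕ) (A B : ℝ → DMat2 m) : Prop :=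
  ∀ z : ℂ, ∀ ψ : ℝ → (Fin m ⊕ Fin m) → ℂ, IsHamVecSol m A B z ψ →
    (∃ x, ψ x ≠ 0) → ∀ a b : ℝ, a < b →
      0 < (∫ x in a..b, (star (ψ x)) ⬝ᵥ ((A x) *ᵥ (ψ x))).re

/-- Boundary data conditions (2.8e). -/
def IsBdry (m : ℕ) (α : Matrix (Fin m) (Fin m ⊕ Fin m) ℂ) : Prop :=
  α * αᴴ = 1 ∧ α * Jm m * αᴴ = 0

/-- Initial value (α*  Jα*) for the normalized fundamental system. -/
def initΨ (m : ℕ) (α : Matrix (Fin m) (Fin m ⊕ Fin m) ℂ) : DMat2 m :=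
  Matrix.fromCols αᴴ (Jm m * αᴴ)

/-- The interval from x₀ toward c: [x₀, c) if c > x₀, (c, x₀] if c < x₀. -/
def towardInt (x0 c : ℝ) : Set ℝ := Set.Ico x0 c ∪ Set.Ioc c x0


/-- `U(z,x) = Ψ(z,x)·[I; M]`. -/
def Ufun (m : ℕ) (Ψ : ℝ → DMat2 m) (M : DMat m) (x : ℝ) :
    Matrix (Fin m ⊕ Fin m) (Fin m) ℂ := Ψ x * colI m M

/-- Top `m×m` component of `U`. -/
def u1fun (m : ℕ) (Ψ : ℝ → DMat2 m) (M : DMat m) (x : ℝ) : DMat m :=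
  Matrix.toRows₁ (Ufun m Ψ M x)

/-- Bottom `m×m` component of `U`. -/
def u2fun (m : ℕ) (Ψ : ℝ → DMat2 m) (M : DMat m) (x : ℝ) : DMat m :=
  Matrix.toRows₂ (Ufun m Ψ M x)

/-- Cayley-type transform `ϑ = (u₁ + iσu₂)(u₁ − iσu₂)⁻¹`. -/
def cayley (m : ℕ) (σ : ℝ) (u1 u2 : DMat m) : DMat m :=
  (u1 + ((σ : ℂ) * Complex.I) • u2) * (u1 - ((σ : ℂ) * Complex.I) • u2)⁻¹

/-- The m×m blocks of a 2m×2m matrix, indexed by `Fin 2`. -/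
def blkOf (m : ℕ) (M : DMat2 m) : Fin 2 → Fin 2 → DMat m := fun a b =>
  if a = 0 then (if b = 0 then M.toBlocks₁₁ else M.toBlocks₁₂)
  else (if b = 0 then M.toBlocks₂₁ else M.toBlocks₂₂)

/-- Full-line Weyl-Titchmarsh matrix built from the half-line ones (eq. (2.620)). -/
def weylFull (m : ℕ) (Mm Mp : DMat m) : DMat2 m :=
  Matrix.fromBlocks ((Mm - Mp)⁻¹) ((2:ℂ)⁻¹ • ((Mm - Mp)⁻¹ * (Mm + Mp)))
    ((2:ℂ)⁻¹ • ((Mm + Mp) * (Mm - Mp)⁻¹)) (Mp * (Mm - Mp)⁻¹ * Mm)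

/-- Pair solutions (u₁, u₂) of the Dirac system on a set `S`. -/
def DiracPairSol (m : ℕ) (B : ℝ → DMat2 m) (z : ℂ) (S : Set ℝ)
    (u1 u2 : ℝ → DMat m) : Prop :=
  ∃ w1 w2 : ℝ → DMat m, AEDerivOn m S u1 w1 ∧ AEDerivOn m S u2 w2 ∧
    ∀ᵐ x : ℝ, x ∈ S →
      (-(w2 x) = (z • (1 : DMat m) + (B x).toBlocks₁₁) * u1 x + (B x).toBlocks₁₂ * u2 x ∧
        w1 x = (B x).toBlocks₂₁ * u1 x + (z • (1 : DMat m) + (B x).toBlocks₂₂) * u2 x)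

/-- Square-integrable solutions of the Dirac system on `[c, ∞)`. -/
def NplusSet (m : ℕ) (B : ℝ → DMat2 m) (z : ℂ) (c : ℝ) :
    Set (Set.Ici c → (Fin m ⊕ Fin m) → ℂ) :=
  {φ | ∃ w : ℝ → (Fin m ⊕ Fin m) → ℂ,
    LocallyIntegrableOn w (Set.Ici c) volume ∧
    (∀ x y : Set.Ici c, φ y = φ x + ∫ t in (x : ℝ)..(y : ℝ), w t) ∧
    (∀ᵐ t : ℝ, ∀ ht : t ∈ Set.Ici c,
      (Jm m) *ᵥ w t = (z • (1 : DMat2 m) + B t) *ᵥ φ ⟨t, ht⟩) ∧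
    IntegrableOn (fun t : ℝ =>
      if ht : t ∈ Set.Ici c then ∑ i, ‖φ ⟨t, ht⟩ i‖ ^ 2 else 0) (Set.Ici c) volume}

/-- Square-integrable solutions of the Dirac system on `(−∞, c]`. -/
def NminusSet (m : ℕ) (B : ℝ → DMat2 m) (z : ℂ) (c : ℝ) :
    Set (Set.Iic c → (Fin m ⊕ Fin m) → ℂ) :=
  {φ | ∃ w : ℝ → (Fin m ⊕ Fin m) → ℂ,
    LocallyIntegrableOn w (Set.Iic c) volume ∧
    (∀ x y : Set.Iic c, φ y = φ x + ∫ t in (x : ℝ)..(y : ℝ), w t) ∧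
    (∀ᵐ t : ℝ, ∀ ht : t ∈ Set.Iic c,
      (Jm m) *ᵥ w t = (z • (1 : DMat2 m) + B t) *ᵥ φ ⟨t, ht⟩) ∧
    IntegrableOn (fun t : ℝ =>
      if ht : t ∈ Set.Iic c then ∑ i, ‖φ ⟨t, ht⟩ i‖ ^ 2 else 0) (Set.Iic c) volume}



section WeylAux

open MeasureTheory Matrix Set Filter
open scoped Matrix.Norms.L2Operator ComplexOrder

namespace WeylAux
set_option linter.unusedSectionVars false
set_option maxHeartbeats 1000000

variable {n p q : Type*} [Fintype n] [Fintype p] [Fintype q]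
  [DecidableEq n] [DecidableEq p] [DecidableEq q]

instance (priority := 100) findimaux : FiniteDimensional ℝ (Matrix n p ℂ) :=
  FiniteDimensional.trans ℝ ℂ _

/-- Right multiplication by a constant matrix, as a real CLM. -/
def rmulCLM (C : Matrix p q ℂ) : Matrix n p ℂ →L[ℝ] Matrix n q ℂ :=
  LinearMap.toContinuousLinearMap
    { toFun := fun X => X * C
      map_add' := fun X Y => Matrix.add_mul X Y C
      map_smul' := fun c X => by simp [Matrix.smul_mul] }

@[simp] lemma rmulCLM_apply (C : Matrix p q ℂ) (X : Matrix n p ℂ) :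
    rmulCLM C X = X * C := rfl

/-- Left multiplication by a constant matrix, as a real CLM. -/
def lmulCLM (C : Matrix n p ℂ) : Matrix p q ℂ →L[ℝ] Matrix n q ℂ :=
  LinearMap.toContinuousLinearMap
    { toFun := fun X => C * X
      map_add' := fun X Y => Matrix.mul_add C X Y
      map_smul' := fun c X => by simp [Matrix.mul_smul] }

@[simp] lemma lmulCLM_apply (C : Matrix n p ℂ) (X : Matrix p q ℂ) :
    lmulCLM C X = C * X := rfl

/-- Conjugate transpose, as a real CLM. -/
def ctCLM : Matrix n p ℂ →L[ℝ] Matrix p n ℂ :=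
  LinearMap.toContinuousLinearMap
    { toFun := fun X => Xᴴ
      map_add' := fun X Y => Matrix.conjTranspose_add X Y
      map_smul' := fun c X => by
        ext i j; simp [Matrix.conjTranspose_apply, Matrix.smul_apply, star_smul] }

@[simp] lemma ctCLM_apply (X : Matrix n p ℂ) : (ctCLM X : Matrix p n ℂ) = Xᴴ := rfl

/-- Quadratic form `X ↦ v* X v`, as a real CLM. -/
def quadCLM (v : p → ℂ) : Matrix p p ℂ →L[ℝ] ℂ :=
  LinearMap.toContinuousLinearMap
    { toFun := fun X => star v ⬝ᵥ (X *ᵥ v)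
      map_add' := fun X Y => by simp [Matrix.add_mulVec, dotProduct_add]
      map_smul' := fun c X => by simp [Matrix.smul_mulVec, dotProduct_smul] }

@[simp] lemma quadCLM_apply (v : p → ℂ) (X : Matrix p p ℂ) :
    quadCLM v X = star v ⬝ᵥ (X *ᵥ v) := rfl

/-- `X ↦ X *ᵥ w`, as a real CLM. -/
def mulVecCLM (w : p → ℂ) : Matrix n p ℂ →L[ℝ] (n → ℂ) :=
  LinearMap.toContinuousLinearMap
    { toFun := fun X => X *ᵥ w
      map_add' := fun X Y => Matrix.add_mulVec X Y w
      map_smul' := fun c X => Matrix.smul_mulVec c X w }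

@[simp] lemma mulVecCLM_apply (w : p → ℂ) (X : Matrix n p ℂ) :
    mulVecCLM w X = X *ᵥ w := rfl

lemma aesm_mul {α : Type*} [MeasurableSpace α] {μ : Measure α}
    {f : α → Matrix n p ℂ} {g : α → Matrix p q ℂ}
    (hf : AEStronglyMeasurable f μ) (hg : AEStronglyMeasurable g μ) :
    AEStronglyMeasurable (fun x => f x * g x) μ :=
  (continuous_fst.matrix_mul continuous_snd).comp_aestronglyMeasurable (hf.prodMk hg)

lemma aesm_ct {α : Type*} [MeasurableSpace α] {μ : Measure α}
    {f : α → Matrix n p ℂ} (hf : AEStronglyMeasurable f μ) :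
    AEStronglyMeasurable (fun x => (f x)ᴴ) μ :=
  (continuous_id.matrix_conjTranspose).comp_aestronglyMeasurable hf

lemma norm_ct_mul_mul_le (X : Matrix n p ℂ) (K : Matrix n n ℂ) (Y : Matrix n p ℂ) :
    ‖Xᴴ * K * Y‖ ≤ ‖X‖ * ‖K‖ * ‖Y‖ := by
  calc ‖Xᴴ * K * Y‖ ≤ ‖Xᴴ * K‖ * ‖Y‖ := Matrix.l2_opNorm_mul _ _
    _ ≤ (‖Xᴴ‖ * ‖K‖) * ‖Y‖ := by
        have := Matrix.l2_opNorm_mul Xᴴ K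
        exact mul_le_mul_of_nonneg_right this (norm_nonneg _)
    _ = ‖X‖ * ‖K‖ * ‖Y‖ := by rw [Matrix.l2_opNorm_conjTranspose]

/-- Fubini triangle swap. -/
lemma triangle {a b : ℝ} (K : Matrix n n ℂ) (W : ℝ → Matrix n p ℂ)
    (hW : IntegrableOn W (Ioc a b) volume) :
    ∫ s in Ioc a b, (W s)ᴴ * K * (∫ t in Ioc s b, W t)
      = ∫ t in Ioc a b, (∫ s in Ioc a t, W s)ᴴ * K * W t := by
  set μ := volume.restrict (Ioc a b) with hμ
  have hWm : AEStronglyMeasurable W μ := hW.aestronglyMeasurable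
  set g : ℝ × ℝ → Matrix p p ℂ := fun sp => (W sp.1)ᴴ * K * W sp.2 with hg
  have hgm : AEStronglyMeasurable g (μ.prod μ) := by
    have h1 : AEStronglyMeasurable (fun sp : ℝ × ℝ => W sp.1) (μ.prod μ) := hWm.comp_fst
    have h2 : AEStronglyMeasurable (fun sp : ℝ × ℝ => W sp.2) (μ.prod μ) := hWm.comp_snd
    exact aesm_mul (aesm_mul (aesm_ct h1) aestronglyMeasurable_const) h2
  have hgi : Integrable g (μ.prod μ) := by
    have hdom : Integrable (fun sp : ℝ × ℝ => ‖W sp.1‖ * (‖K‖ * ‖W sp.2‖)) (μ.prod μ) :=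
      hW.norm.mul_prod (hW.norm.const_mul ‖K‖)
    refine hdom.mono' hgm (Filter.Eventually.of_forall fun sp => ?_)
    have := norm_ct_mul_mul_le (W sp.1) K (W sp.2)
    calc ‖g sp‖ ≤ ‖W sp.1‖ * ‖K‖ * ‖W sp.2‖ := this
      _ = ‖W sp.1‖ * (‖K‖ * ‖W sp.2‖) := by ring
  set Φ : ℝ × ℝ → Matrix p p ℂ :=
    fun sp => Set.indicator {q : ℝ × ℝ | q.1 < q.2} g sp with hΦ
  have hΦi : Integrable Φ (μ.prod μ) :=
    hgi.indicator (measurableSet_lt measurable_fst measurable_snd)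
  have hswap : (∫ s, ∫ t, Φ (s, t) ∂μ ∂μ) = ∫ t, ∫ s, Φ (s, t) ∂μ ∂μ :=
    MeasureTheory.integral_integral_swap (by exact hΦi)
  have hL : (∫ s, ∫ t, Φ (s, t) ∂μ ∂μ)
      = ∫ s in Ioc a b, (W s)ᴴ * K * (∫ t in Ioc s b, W t) := by
    refine setIntegral_congr_fun measurableSet_Ioc (fun s hs => ?_)
    have e1 : (fun t => Φ (s, t)) = fun t =>
        Set.indicator (Ioi s) (fun t => ((W s)ᴴ * K) * W t) t := by
      funext t
      by_cases h : s < t <;>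
        simp [Φ, g, Set.indicator_apply, h, Set.mem_Ioi, Matrix.mul_assoc]
    rw [e1, setIntegral_indicator measurableSet_Ioi]
    have hset : Ioc a b ∩ Ioi s = Ioc s b := by
      ext x
      simp only [Set.mem_inter_iff, Set.mem_Ioc, Set.mem_Ioi]
      constructor
      · rintro ⟨⟨_, h2⟩, h3⟩; exact ⟨h3, h2⟩
      · rintro ⟨h1, h2⟩; exact ⟨⟨lt_trans hs.1 h1, h2⟩, h1⟩
    rw [hset]
    have hcomm := ContinuousLinearMap.integral_comp_comm (lmulCLM ((W s)ᴴ * K))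
      (hW.mono_set (Set.Ioc_subset_Ioc_left hs.1.le))
    simpa [Matrix.mul_assoc] using hcomm
  have hR : (∫ t, ∫ s, Φ (s, t) ∂μ ∂μ)
      = ∫ t in Ioc a b, (∫ s in Ioc a t, W s)ᴴ * K * W t := by
    refine setIntegral_congr_fun measurableSet_Ioc (fun t ht => ?_)
    have e1 : (fun s => Φ (s, t)) = fun s =>
        Set.indicator (Iio t) (fun s => (W s)ᴴ * (K * W t)) s := by
      funext s
      by_cases h : s < t <;>
        simp [Φ, g, Set.indicator_apply, h, Set.mem_Iio, Matrix.mul_assoc]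
    rw [e1, setIntegral_indicator measurableSet_Iio]
    have hset : Ioc a b ∩ Iio t = Ioo a t := by
      ext x
      simp only [Set.mem_inter_iff, Set.mem_Ioc, Set.mem_Iio, Set.mem_Ioo]
      constructor
      · rintro ⟨⟨h1, _⟩, h3⟩; exact ⟨h1, h3⟩
      · rintro ⟨h1, h2⟩; exact ⟨⟨h1, le_trans h2.le ht.2⟩, h2⟩
    rw [hset, ← integral_Ioc_eq_integral_Ioo]
    have hcomm := ContinuousLinearMap.integral_comp_comm
      ((rmulCLM (K * W t)).comp (ctCLM))
      (hW.mono_set (Set.Ioc_subset_Ioc_right ht.2))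
    simpa [Matrix.mul_assoc] using hcomm
  rw [← hL, ← hR]
  exact hswap

/-- Integration by parts / fundamental identity for the quadratic form. -/
lemma parts {a b : ℝ} (hab : a ≤ b) (K : Matrix n n ℂ) (W U : ℝ → Matrix n p ℂ)
    (hW : IntegrableOn W (Ioc a b) volume) (hU : Continuous U)
    (hrep : ∀ x ∈ Icc a b, U x = U a + ∫ t in Ioc a x, W t) :
    (U b)ᴴ * K * U b - (U a)ᴴ * K * U a
      = ∫ x in Ioc a b, ((W x)ᴴ * K * U x + (U x)ᴴ * K * W x) := by
  set C := U a with hC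
  set Fb := ∫ t in Ioc a b, W t with hFb
  have hUb : U b = C + Fb := hrep b ⟨hab, le_refl b⟩
  set R : ℝ → Matrix n p ℂ := fun s => ∫ t in Ioc s b, W t with hRdef
  -- splitting of the primitive
  have hsplit : ∀ s ∈ Icc a b, Fb = (∫ t in Ioc a s, W t) + R s := by
    intro s hs
    rw [hFb, ← Set.Ioc_union_Ioc_eq_Ioc hs.1 hs.2]
    exact setIntegral_union (Set.Ioc_disjoint_Ioc_of_le le_rfl) measurableSet_Ioc
      (hW.mono_set (Set.Ioc_subset_Ioc_right hs.2))
      (hW.mono_set (Set.Ioc_subset_Ioc_left hs.1))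
  have hUs : ∀ s ∈ Icc a b, U s = U b - R s := by
    intro s hs
    rw [hrep s hs, hUb, hsplit s hs]
    abel
  -- boundedness of U on Icc a b
  obtain ⟨CU, hCU⟩ := IsCompact.exists_bound_of_continuousOn (isCompact_Icc (a := a) (b := b))
    hU.continuousOn
  set CU' := max CU 0 with hCU'
  have hCU'' : ∀ x ∈ Icc a b, ‖U x‖ ≤ CU' := fun x hx =>
    le_trans (hCU x hx) (le_max_left _ _)
  -- integrability facts
  have hWm : AEStronglyMeasurable W (volume.restrict (Ioc a b)) := hW.aestronglyMeasurable
  have hUm : AEStronglyMeasurable U (volume.restrict (Ioc a b)) :=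
    hU.aestronglyMeasurable.restrict
  have hWKU : IntegrableOn (fun x => (W x)ᴴ * K * U x) (Ioc a b) volume := by
    have hm : AEStronglyMeasurable (fun x => (W x)ᴴ * K * U x)
        (volume.restrict (Ioc a b)) :=
      aesm_mul (aesm_mul (aesm_ct hWm) aestronglyMeasurable_const) hUm
    have hdom : Integrable (fun x => ‖W x‖ * (‖K‖ * CU')) (volume.restrict (Ioc a b)) :=
      hW.norm.mul_const _
    refine hdom.mono' hm ?_
    refine (ae_restrict_iff' measurableSet_Ioc).2 (Filter.Eventually.of_forall fun x hx => ?_)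
    calc ‖(W x)ᴴ * K * U x‖ ≤ ‖W x‖ * ‖K‖ * ‖U x‖ := norm_ct_mul_mul_le _ _ _
      _ ≤ ‖W x‖ * ‖K‖ * CU' := by
          apply mul_le_mul_of_nonneg_left (hCU'' x (Set.Ioc_subset_Icc_self hx))
          positivity
      _ = ‖W x‖ * (‖K‖ * CU') := by ring
  have hUKW : IntegrableOn (fun x => (U x)ᴴ * K * W x) (Ioc a b) volume := by
    have hm : AEStronglyMeasurable (fun x => (U x)ᴴ * K * W x)
        (volume.restrict (Ioc a b)) :=
      aesm_mul (aesm_mul (aesm_ct hUm) aestronglyMeasurable_const) hWm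
    have hdom : Integrable (fun x => CU' * ‖K‖ * ‖W x‖) (volume.restrict (Ioc a b)) :=
      (hW.norm.const_mul _)
    refine hdom.mono' hm ?_
    refine (ae_restrict_iff' measurableSet_Ioc).2 (Filter.Eventually.of_forall fun x hx => ?_)
    calc ‖(U x)ᴴ * K * W x‖ ≤ ‖U x‖ * ‖K‖ * ‖W x‖ := norm_ct_mul_mul_le _ _ _
      _ ≤ CU' * ‖K‖ * ‖W x‖ := by
          have := hCU'' x (Set.Ioc_subset_Icc_self hx)
          apply mul_le_mul_of_nonneg_right
          · exact mul_le_mul_of_nonneg_right this (norm_nonneg _)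
          · exact norm_nonneg _
  have hWKUb : IntegrableOn (fun x => (W x)ᴴ * K * U b) (Ioc a b) volume := by
    have := ContinuousLinearMap.integrable_comp
      ((rmulCLM (K * U b)).comp (ctCLM)) hW
    simpa [Function.comp, Matrix.mul_assoc, IntegrableOn] using this
  have hCKW : IntegrableOn (fun x => Cᴴ * K * W x) (Ioc a b) volume := by
    have := ContinuousLinearMap.integrable_comp (lmulCLM (Cᴴ * K)) hW
    simpa [Function.comp, Matrix.mul_assoc, IntegrableOn] using this
  have hRx : ∀ x ∈ Icc a b, R x = U b - U x := by
    intro x hx; rw [hUs x hx]; abel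
  have hWKR : IntegrableOn (fun x => (W x)ᴴ * K * R x) (Ioc a b) volume := by
    refine (hWKUb.sub hWKU).congr ?_
    refine (ae_restrict_iff' measurableSet_Ioc).2 (Filter.Eventually.of_forall fun x hx => ?_)
    simp only [Pi.sub_apply]
    rw [hRx x (Set.Ioc_subset_Icc_self hx), Matrix.mul_sub]
  have hIb := ContinuousLinearMap.integral_comp_comm
      ((rmulCLM (K * U b)).comp (ctCLM)) hW
  have step3 : (∫ x in Ioc a b, (W x)ᴴ * K * U b) = Fbᴴ * K * U b := by
    simpa [ContinuousLinearMap.coe_comp', Function.comp, Matrix.mul_assoc] using hIb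
  have step5 : (∫ x in Ioc a b, Cᴴ * K * W x) = Cᴴ * K * Fb := by
    simpa [Matrix.mul_assoc] using
      ContinuousLinearMap.integral_comp_comm (lmulCLM (Cᴴ * K)) hW
  have step4 : (∫ x in Ioc a b, (W x)ᴴ * K * R x)
      = (∫ x in Ioc a b, (U x)ᴴ * K * W x) - Cᴴ * K * Fb := by
    have htri : (∫ x in Ioc a b, (W x)ᴴ * K * R x)
        = ∫ t in Ioc a b, (∫ s in Ioc a t, W s)ᴴ * K * W t := triangle K W hW
    rw [htri, ← step5, ← integral_sub hUKW hCKW]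
    refine setIntegral_congr_fun measurableSet_Ioc (fun t ht => ?_)
    have h1 : (∫ s in Ioc a t, W s) = U t - C := by
      rw [hrep t (Set.Ioc_subset_Icc_self ht)]; abel
    rw [h1, Matrix.conjTranspose_sub, Matrix.sub_mul, Matrix.sub_mul]
  have step2 : (∫ x in Ioc a b, (W x)ᴴ * K * U x)
      = Fbᴴ * K * U b - ((∫ x in Ioc a b, (U x)ᴴ * K * W x) - Cᴴ * K * Fb) := by
    rw [← step3, ← step4, ← integral_sub hWKUb hWKR]
    refine setIntegral_congr_fun measurableSet_Ioc (fun x hx => ?_)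
    rw [hRx x (Set.Ioc_subset_Icc_self hx), Matrix.mul_sub, sub_sub_cancel]
  rw [integral_add hWKU hUKW, step2, hUb]
  simp only [Matrix.conjTranspose_add, Matrix.add_mul, Matrix.mul_add]
  abel

lemma psd_smul {X : Matrix p p ℂ} (h : X.PosSemidef) {t : ℂ} (ht : 0 ≤ t) :
    (t • X).PosSemidef := by
  have htim : star t = t := by
    rw [Complex.star_def, Complex.conj_eq_iff_im]
    have := (Complex.le_def.mp ht).2; simpa using this.symm
  constructor
  · show (t • X)ᴴ = t • X
    rw [Matrix.conjTranspose_smul, htim, h.1.eq]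
  · intro v
    exact (h.smul ht).2 v

lemma posdef_smul {X : Matrix p p ℂ} (h : X.PosDef) {t : ℂ} (ht : 0 < t) :
    (t • X).PosDef := by
  have htim : star t = t := by
    rw [Complex.star_def, Complex.conj_eq_iff_im]
    have := (Complex.le_def.mp ht.le).2; simpa using this.symm
  constructor
  · show (t • X)ᴴ = t • X
    rw [Matrix.conjTranspose_smul, htim, h.1.eq]
  · intro v hv
    exact (h.smul ht).2 hv

end WeylAux

end WeylAux

set_option maxHeartbeats 2000000 in
theorem statement9 (m : ℕ) (hm : 1 ≤ m) (A B : ℝ → DMat2 m)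
    (h21 : Hyp21 m A B) (h22 : Atkinson m A B)
    (z : ℂ) (hz : z.im ≠ 0) (x0 c : ℝ) (hc : c ≠ x0)
    (α : Matrix (Fin m) (Fin m ⊕ Fin m) ℂ) (hα : IsBdry m α)
    (M : DMat m) (Ψ : ℝ → DMat2 m)
    (hΨ : IsHamMatSol m A B z Ψ) (hΨ0 : Ψ x0 = initΨ m α)
    (hM : (-(Ec m z x0 c Ψ M)).PosSemidef) :
    (Real.sign ((c - x0) * z.im) • matIm M).PosDef := by
  classical
  obtain ⟨hα1, hα2⟩ := hα
  obtain ⟨Ψ', hΨ'loc, hΨrep, hΨode⟩ := hΨ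
  set s : ℝ := Real.sign ((c - x0) * z.im) with hs
  set L : Matrix (Fin m ⊕ Fin m) (Fin m) ℂ := colI m M with hL
  set U : ℝ → Matrix (Fin m ⊕ Fin m) (Fin m) ℂ := fun x => Ψ x * L with hUdef
  set W : ℝ → Matrix (Fin m ⊕ Fin m) (Fin m) ℂ := fun x => Ψ' x * L with hWdef
  set K : DMat2 m := Complex.I • Jm m with hKdef
  -- J identities
  have hneg1 : (-1 : DMat2 m) = Matrix.fromBlocks (-1) 0 0 (-1) := by
    rw [← Matrix.fromBlocks_one, Matrix.fromBlocks_neg]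
    simp
  have hJH : (Jm m)ᴴ = -(Jm m) := by
    show (Matrix.fromBlocks 0 (-1) 1 0 : DMat2 m)ᴴ
      = -(Matrix.fromBlocks 0 (-1) 1 0 : DMat2 m)
    rw [Matrix.fromBlocks_conjTranspose, Matrix.fromBlocks_neg]
    simp
  have hJJ : Jm m * Jm m = -1 := by
    show (Matrix.fromBlocks 0 (-1) 1 0 : DMat2 m) * Matrix.fromBlocks 0 (-1) 1 0 = -1
    rw [Matrix.fromBlocks_multiply, hneg1]
    simp
  have hg1 : α * (Jm m * αᴴ) = 0 := by rw [← Matrix.mul_assoc]; exact hα2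
  have hg2 : Jm m * (Jm m * αᴴ) = -αᴴ := by
    rw [← Matrix.mul_assoc, hJJ, Matrix.neg_mul, Matrix.one_mul]
  -- continuity
  have hΨint : ∀ a b : ℝ, IntervalIntegrable Ψ' volume a b := fun a b =>
    (hΨ'loc.integrableOn_isCompact isCompact_uIcc).intervalIntegrable
  have hΨcont : Continuous Ψ := by
    have h0 : Continuous (fun x : ℝ => ∫ t in (0:ℝ)..x, Ψ' t) :=
      intervalIntegral.continuous_primitive hΨint 0
    have : Ψ = fun x => Ψ 0 + ∫ t in (0:ℝ)..x, Ψ' t := funext fun x => hΨrep 0 x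
    rw [this]; exact continuous_const.add h0
  have hUcont : Continuous U := hΨcont.matrix_mul continuous_const
  -- integrability
  have hWint : ∀ a b : ℝ, IntegrableOn W (Ioc a b) volume := by
    intro a b
    have h1 : IntegrableOn Ψ' (Ioc a b) volume :=
      (hΨ'loc.integrableOn_isCompact isCompact_Icc).mono_set Set.Ioc_subset_Icc_self
    have h2 := (WeylAux.rmulCLM (n := Fin m ⊕ Fin m) L).integrable_comp h1
    simpa [WeylAux.rmulCLM_apply, hWdef, IntegrableOn] using h2
  have hUAUint : ∀ a b : ℝ, IntegrableOn (fun x => (U x)ᴴ * A x * U x) (Ioc a b) volume := by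
    intro a b
    have hUm : AEStronglyMeasurable U (volume.restrict (Ioc a b)) :=
      hUcont.aestronglyMeasurable.restrict
    have hAm : AEStronglyMeasurable A (volume.restrict (Ioc a b)) :=
      h21.locA.aestronglyMeasurable.restrict
    have hm := WeylAux.aesm_mul (WeylAux.aesm_mul (WeylAux.aesm_ct hUm) hAm) hUm
    obtain ⟨CU, hCU⟩ := IsCompact.exists_bound_of_continuousOn
      (isCompact_Icc (a := a) (b := b)) hUcont.continuousOn
    set c' : ℝ := max CU 0 with hc'
    have hCU' : ∀ x ∈ Set.Icc a b, ‖U x‖ ≤ c' := fun x hx =>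
      le_trans (hCU x hx) (le_max_left _ _)
    have hAint : IntegrableOn A (Ioc a b) volume :=
      (h21.locA.integrableOn_isCompact isCompact_Icc).mono_set Set.Ioc_subset_Icc_self
    have hdom : Integrable (fun x => c' * ‖A x‖ * c') (volume.restrict (Ioc a b)) :=
      (hAint.norm.const_mul c').mul_const c'
    refine hdom.mono' hm ?_
    refine (ae_restrict_iff' measurableSet_Ioc).2 (Filter.Eventually.of_forall fun x hx => ?_)
    have hb := hCU' x (Set.Ioc_subset_Icc_self hx)
    calc ‖(U x)ᴴ * A x * U x‖ ≤ ‖U x‖ * ‖A x‖ * ‖U x‖ := WeylAux.norm_ct_mul_mul_le _ _ _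
      _ ≤ c' * ‖A x‖ * c' := by
          have h1 : ‖U x‖ * ‖A x‖ ≤ c' * ‖A x‖ :=
            mul_le_mul_of_nonneg_right hb (norm_nonneg _)
          have h2 : ‖U x‖ * ‖A x‖ * ‖U x‖ ≤ c' * ‖A x‖ * ‖U x‖ :=
            mul_le_mul_of_nonneg_right h1 (norm_nonneg _)
          refine le_trans h2 (mul_le_mul_of_nonneg_left hb ?_)
          positivity
  -- representation of U
  have hUrep : ∀ a x : ℝ, a ≤ x → U x = U a + ∫ t in Ioc a x, W t := by
    intro a x hax
    have h2 : (∫ t in a..x, Ψ' t) * L = ∫ t in a..x, W t := by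
      have h3 := (WeylAux.rmulCLM (n := Fin m ⊕ Fin m) L).intervalIntegral_comp_comm
        (hΨint a x)
      simpa [WeylAux.rmulCLM_apply, hWdef] using h3.symm
    show Ψ x * L = Ψ a * L + ∫ t in Ioc a x, W t
    rw [hΨrep a x, Matrix.add_mul, h2, intervalIntegral.integral_of_le hax]
  -- a.e. derivative identity
  have hae : ∀ᵐ x : ℝ, (W x)ᴴ * K * U x + (U x)ᴴ * K * W x
      = ((-2 * z.im : ℝ) : ℂ) • ((U x)ᴴ * A x * U x) := by
    filter_upwards [hΨode, h21.posA, h21.hermB] with x hode hApsd hBh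
    have hCH : (z • A x + B x)ᴴ = (starRingEnd ℂ z) • A x + B x := by
      rw [Matrix.conjTranspose_add, Matrix.conjTranspose_smul, hApsd.1.eq, hBh.eq]
      rfl
    have hP'J : (Ψ' x)ᴴ * Jm m = -((Ψ x)ᴴ * (z • A x + B x)ᴴ) := by
      have h1 := congrArg Matrix.conjTranspose hode
      rw [Matrix.conjTranspose_mul, Matrix.conjTranspose_mul, hJH, Matrix.mul_neg] at h1
      rw [← h1, neg_neg]
    have t1 : (W x)ᴴ * K * U x
        = Complex.I • (-(Lᴴ * (Ψ x)ᴴ * (z • A x + B x)ᴴ * Ψ x * L)) := by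
      show (Ψ' x * L)ᴴ * (Complex.I • Jm m) * (Ψ x * L) = _
      rw [Matrix.mul_smul, Matrix.smul_mul]
      congr 1
      calc (Ψ' x * L)ᴴ * Jm m * (Ψ x * L)
          = Lᴴ * ((Ψ' x)ᴴ * Jm m) * (Ψ x * L) := by
            rw [Matrix.conjTranspose_mul]; simp only [Matrix.mul_assoc]
        _ = Lᴴ * -((Ψ x)ᴴ * (z • A x + B x)ᴴ) * (Ψ x * L) := by rw [hP'J]
        _ = -(Lᴴ * (Ψ x)ᴴ * (z • A x + B x)ᴴ * Ψ x * L) := by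
            simp only [Matrix.mul_neg, Matrix.neg_mul, Matrix.mul_assoc]
    have t2 : (U x)ᴴ * K * W x
        = Complex.I • (Lᴴ * (Ψ x)ᴴ * (z • A x + B x) * Ψ x * L) := by
      show (Ψ x * L)ᴴ * (Complex.I • Jm m) * (Ψ' x * L) = _
      rw [Matrix.mul_smul, Matrix.smul_mul]
      congr 1
      calc (Ψ x * L)ᴴ * Jm m * (Ψ' x * L)
          = Lᴴ * (Ψ x)ᴴ * (Jm m * Ψ' x) * L := by
            rw [Matrix.conjTranspose_mul]; simp only [Matrix.mul_assoc]
        _ = Lᴴ * (Ψ x)ᴴ * ((z • A x + B x) * Ψ x) * L := by rw [hode]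
        _ = Lᴴ * (Ψ x)ᴴ * (z • A x + B x) * Ψ x * L := by
            simp only [Matrix.mul_assoc]
    rw [t1, t2, ← smul_add]
    have t3 : -(Lᴴ * (Ψ x)ᴴ * (z • A x + B x)ᴴ * Ψ x * L)
          + Lᴴ * (Ψ x)ᴴ * (z • A x + B x) * Ψ x * L
        = Lᴴ * (Ψ x)ᴴ * ((z - starRingEnd ℂ z) • A x) * Ψ x * L := by
      have hCdiff : (z • A x + B x) - (z • A x + B x)ᴴ
          = (z - starRingEnd ℂ z) • A x := by
        rw [hCH, sub_smul]; abel
      rw [← hCdiff]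
      simp only [Matrix.sub_mul, Matrix.mul_sub, Matrix.mul_assoc]
      abel
    rw [t3]
    have t4 : Lᴴ * (Ψ x)ᴴ * ((z - starRingEnd ℂ z) • A x) * Ψ x * L
        = (z - starRingEnd ℂ z) • (Lᴴ * (Ψ x)ᴴ * A x * Ψ x * L) := by
      simp only [Matrix.mul_smul, Matrix.smul_mul]
    rw [t4, smul_smul]
    have hscalar : Complex.I * (z - starRingEnd ℂ z) = ((-2 * z.im : ℝ) : ℂ) := by
      rw [Complex.sub_conj]
      push_cast
      ring_nf
      rw [Complex.I_sq]
      ring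
    rw [hscalar]
    congr 1
    have huau : (U x)ᴴ * A x * U x = Lᴴ * (Ψ x)ᴴ * A x * Ψ x * L := by
      show (Ψ x * L)ᴴ * A x * (Ψ x * L) = Lᴴ * (Ψ x)ᴴ * A x * Ψ x * L
      rw [Matrix.conjTranspose_mul]; simp only [Matrix.mul_assoc]
    rw [huau]
  -- main identity
  have key : ∀ a b : ℝ, a ≤ b →
      (U b)ᴴ * K * U b - (U a)ᴴ * K * U a
        = ((-2 * z.im : ℝ) : ℂ) • ∫ x in Ioc a b, (U x)ᴴ * A x * U x := by
    intro a b hab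
    rw [WeylAux.parts hab K W U (hWint a b) hUcont (fun x hx => hUrep a x hx.1)]
    rw [← integral_smul]
    exact setIntegral_congr_ae measurableSet_Ioc (hae.mono fun x hx _ => hx)
  -- positive definiteness of the A-integral
  have hαU : α * U x0 = 1 := by
    show α * (Ψ x0 * L) = 1
    rw [hΨ0, hL]
    show α * (initΨ m α * colI m M) = 1
    rw [initΨ, colI, Matrix.fromCols_mul_fromRows, Matrix.mul_one, Matrix.mul_add, hα1]
    have h4 : α * (Jm m * αᴴ * M) = 0 := by
      simp only [← Matrix.mul_assoc]
      rw [hα2, Matrix.zero_mul]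
    rw [h4, add_zero]
  have posdefT : ∀ a b : ℝ, a < b →
      (∫ x in Ioc a b, (U x)ᴴ * A x * U x).PosDef := by
    intro a b hab
    rw [Matrix.posDef_iff_dotProduct_mulVec]
    constructor
    · show (∫ x in Ioc a b, (U x)ᴴ * A x * U x)ᴴ = _
      have h1 := ContinuousLinearMap.integral_comp_comm
        (WeylAux.ctCLM (n := Fin m) (p := Fin m)) (hUAUint a b)
      simp only [WeylAux.ctCLM_apply] at h1
      rw [← h1]
      refine setIntegral_congr_ae measurableSet_Ioc ?_
      filter_upwards [h21.posA] with x hApsd _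
      simp [Matrix.conjTranspose_mul, Matrix.mul_assoc, hApsd.1.eq]
    · intro v hv
      have hψode : ∀ᵐ t : ℝ, Jm m *ᵥ (Ψ' t *ᵥ (L *ᵥ v))
          = (z • A t + B t) *ᵥ (U t *ᵥ v) := by
        filter_upwards [hΨode] with t hode
        have h4 : U t *ᵥ v = Ψ t *ᵥ (L *ᵥ v) := by rw [Matrix.mulVec_mulVec]
        rw [h4, Matrix.mulVec_mulVec, hode]
        simp [Matrix.mulVec_mulVec, Matrix.mul_assoc]
      have hsol : IsHamVecSol m A B z (fun x => U x *ᵥ v) := by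
        refine ⟨fun x => Ψ' x *ᵥ (L *ᵥ v), ?_, ?_, ?_⟩
        · rw [MeasureTheory.locallyIntegrable_iff]
          intro k hk
          have h2 := (WeylAux.mulVecCLM (n := Fin m ⊕ Fin m) (L *ᵥ v)).integrable_comp
            (hΨ'loc.integrableOn_isCompact hk)
          simpa [WeylAux.mulVecCLM_apply, IntegrableOn] using h2
        · intro a' b'
          have h2 : (∫ t in a'..b', Ψ' t) *ᵥ (L *ᵥ v) = ∫ t in a'..b', Ψ' t *ᵥ (L *ᵥ v) := by
            have h3 := (WeylAux.mulVecCLM (n := Fin m ⊕ Fin m) (L *ᵥ v)).intervalIntegral_comp_comm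
              (hΨint a' b')
            simpa [WeylAux.mulVecCLM_apply] using h3.symm
          have h4 : ∀ y : ℝ, U y *ᵥ v = Ψ y *ᵥ (L *ᵥ v) := fun y => by
            rw [Matrix.mulVec_mulVec]
          show U b' *ᵥ v = U a' *ᵥ v + ∫ t in a'..b', Ψ' t *ᵥ (L *ᵥ v)
          rw [h4 b', h4 a', hΨrep a' b', Matrix.add_mulVec, h2]
        · exact hψode
      have hne : (fun x => U x *ᵥ v) x0 ≠ 0 := by
        intro h0
        apply hv
        have h1 : α *ᵥ (U x0 *ᵥ v) = 0 := by
          simp only at h0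
          rw [h0, Matrix.mulVec_zero]
        rw [Matrix.mulVec_mulVec, hαU, Matrix.one_mulVec] at h1
        exact h1
      have hatk := h22 z (fun x => U x *ᵥ v) hsol ⟨x0, hne⟩ a b hab
      have hptwise : ∀ x : ℝ, star v ⬝ᵥ (((U x)ᴴ * A x * U x) *ᵥ v)
          = star (U x *ᵥ v) ⬝ᵥ (A x *ᵥ (U x *ᵥ v)) := by
        intro x
        rw [Matrix.mul_assoc, ← Matrix.mulVec_mulVec, ← Matrix.mulVec_mulVec,
          Matrix.dotProduct_mulVec, ← Matrix.star_mulVec]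
      have hint2 : IntegrableOn (fun x => star (U x *ᵥ v) ⬝ᵥ (A x *ᵥ (U x *ᵥ v)))
          (Ioc a b) volume := by
        have h2 := (WeylAux.quadCLM v).integrable_comp (hUAUint a b)
        refine h2.congr (Filter.Eventually.of_forall fun x => ?_)
        simp only [WeylAux.quadCLM_apply]
        exact hptwise x
      have hq : star v ⬝ᵥ ((∫ x in Ioc a b, (U x)ᴴ * A x * U x) *ᵥ v)
          = ∫ x in Ioc a b, star (U x *ᵥ v) ⬝ᵥ (A x *ᵥ (U x *ᵥ v)) := by
        have h1 := ContinuousLinearMap.integral_comp_comm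
          (WeylAux.quadCLM v) (hUAUint a b)
        simp only [WeylAux.quadCLM_apply] at h1
        rw [← h1]
        exact setIntegral_congr_fun measurableSet_Ioc (fun x _ => hptwise x)
      have him : (∫ x in Ioc a b, star (U x *ᵥ v) ⬝ᵥ (A x *ᵥ (U x *ᵥ v))).im = 0 := by
        have h1 := ContinuousLinearMap.integral_comp_comm Complex.imCLM hint2
        have h2 : (∫ x in Ioc a b, Complex.imCLM
            (star (U x *ᵥ v) ⬝ᵥ (A x *ᵥ (U x *ᵥ v)))) = 0 := by
          rw [setIntegral_congr_ae measurableSet_Ioc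
            (g := fun _ : ℝ => (0:ℝ)) ?_, integral_zero]
          filter_upwards [h21.posA] with x hApsd _
          have h3 := (Matrix.posSemidef_iff_dotProduct_mulVec.mp hApsd).2 (U x *ᵥ v)
          have h4 := (Complex.le_def.mp h3).2
          simpa using h4.symm
        rw [h2] at h1
        simpa using h1.symm
      rw [hq, Complex.lt_def]
      constructor
      · have h5 : (∫ x in a..b, star (U x *ᵥ v) ⬝ᵥ (A x *ᵥ (U x *ᵥ v)))
            = ∫ x in Ioc a b, star (U x *ᵥ v) ⬝ᵥ (A x *ᵥ (U x *ᵥ v)) :=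
          intervalIntegral.integral_of_le hab.le
        rw [← h5]
        simpa using hatk
      · simpa using him.symm
  -- value at x0
  have hinit : (initΨ m α)ᴴ * (Jm m * initΨ m α) = Jm m := by
    have hb11 : α * (Jm m * αᴴ) = 0 := hg1
    have hb12 : α * (Jm m * (Jm m * αᴴ)) = -1 := by
      rw [hg2, Matrix.mul_neg, hα1]
    have hctJα : (Jm m * αᴴ)ᴴ = -(α * Jm m) := by
      rw [Matrix.conjTranspose_mul, Matrix.conjTranspose_conjTranspose, hJH, Matrix.mul_neg]
    have hb21 : (Jm m * αᴴ)ᴴ * (Jm m * αᴴ) = 1 := by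
      rw [hctJα, Matrix.neg_mul, Matrix.mul_assoc, hg2, Matrix.mul_neg, neg_neg, hα1]
    have hb22 : (Jm m * αᴴ)ᴴ * (Jm m * (Jm m * αᴴ)) = 0 := by
      simp [hctJα, hg2, Matrix.mul_neg, Matrix.neg_mul, Matrix.mul_assoc, hg1]
    rw [initΨ, Matrix.mul_fromCols,
      Matrix.conjTranspose_fromCols_eq_fromRows_conjTranspose,
      Matrix.fromRows_mul_fromCols, Matrix.conjTranspose_conjTranspose,
      hb11, hb12, hb21, hb22]
    rfl
  have hLJL : Lᴴ * (Jm m * L) = Mᴴ - M := by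
    rw [hL, colI]
    show (Matrix.fromRows 1 M)ᴴ * ((Matrix.fromBlocks 0 (-1) 1 0) * Matrix.fromRows 1 M)
      = Mᴴ - M
    rw [Matrix.fromBlocks_mul_fromRows,
      Matrix.conjTranspose_fromRows_eq_fromCols_conjTranspose,
      Matrix.fromCols_mul_fromRows]
    simp [sub_eq_add_neg, add_comm]
  have hGx0 : (U x0)ᴴ * K * U x0 = (2:ℂ) • matIm M := by
    have hUx0 : (U x0)ᴴ * (Jm m) * U x0 = Mᴴ - M := by
      show (Ψ x0 * L)ᴴ * (Jm m) * (Ψ x0 * L) = Mᴴ - M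
      rw [hΨ0]
      calc (initΨ m α * L)ᴴ * Jm m * (initΨ m α * L)
          = Lᴴ * ((initΨ m α)ᴴ * (Jm m * initΨ m α)) * L := by
            rw [Matrix.conjTranspose_mul]; simp only [Matrix.mul_assoc]
        _ = Lᴴ * Jm m * L := by rw [hinit]
        _ = Lᴴ * (Jm m * L) := by rw [Matrix.mul_assoc]
        _ = Mᴴ - M := hLJL
    show (U x0)ᴴ * (Complex.I • Jm m) * U x0 = _
    rw [Matrix.mul_smul, Matrix.smul_mul, hUx0]
    rw [matIm, smul_smul]
    have h6 : (2:ℂ) * (2 * Complex.I)⁻¹ = -Complex.I := by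
      have hIne : Complex.I ≠ 0 := Complex.I_ne_zero
      field_simp
      rw [Complex.I_sq]
      ring
    rw [h6, neg_smul, ← smul_neg, neg_sub]
  -- Weyl disk membership
  have hPSD : ((s : ℝ) • ((U c)ᴴ * K * U c)).PosSemidef := by
    have hsign : Real.sign ((x0 - c) * z.im) = -s := by
      rw [hs, show (x0 - c) * z.im = -((c - x0) * z.im) by ring, Real.sign_neg]
    have hEc : -(Ec m z x0 c Ψ M) = s • ((U c)ᴴ * K * U c) := by
      show -(Real.sign ((x0 - c) * z.im) •
        ((Ψ c * colI m M)ᴴ * (Complex.I • Jm m) * (Ψ c * colI m M))) = _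
      rw [hsign, neg_smul, neg_neg]
    rw [← hEc]
    exact hM
  -- real vs complex scalars
  have smul_real : ∀ (r : ℝ) (X : DMat m), r • X = ((r : ℂ)) • X := by
    intro r X
    ext i j
    simp [Matrix.smul_apply, Complex.real_smul]
  -- conclusion
  rcases lt_or_gt_of_ne hc with hlt | hgt
  · -- c < x0
    have hk := key c x0 hlt.le
    rw [hGx0] at hk
    have hTpd := posdefT c x0 hlt
    have h2 : (2:ℂ) • matIm M = (U c)ᴴ * K * U c
        + ((-2 * z.im : ℝ) : ℂ) • ∫ x in Ioc c x0, (U x)ᴴ * A x * U x := by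
      rw [← hk]; abel
    have hmi : matIm M = (2⁻¹:ℂ) • ((U c)ᴴ * K * U c)
        + ((2⁻¹:ℂ) * ((-2 * z.im : ℝ) : ℂ)) • ∫ x in Ioc c x0, (U x)ᴴ * A x * U x := by
      calc matIm M = (2⁻¹:ℂ) • ((2:ℂ) • matIm M) := by rw [smul_smul]; norm_num
        _ = _ := by rw [h2, smul_add, smul_smul]
    have hpos : (0:ℝ) < -s * z.im := by
      rcases lt_or_gt_of_ne hz with hzneg | hzpos
      · have hprod : 0 < (c - x0) * z.im := mul_pos_of_neg_of_neg (by linarith) hzneg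
        rw [hs, Real.sign_of_pos hprod]; linarith
      · have hprod : (c - x0) * z.im < 0 := mul_neg_of_neg_of_pos (by linarith) hzpos
        rw [hs, Real.sign_of_neg hprod]; linarith
    rw [smul_real, hmi, smul_add, smul_smul, smul_smul]
    have e1 : ((s:ℂ) * (2⁻¹:ℂ)) • ((U c)ᴴ * K * U c)
        = (2⁻¹:ℂ) • ((s : ℝ) • ((U c)ᴴ * K * U c)) := by
      rw [smul_real s, smul_smul]; ring_nf
    have e2 : (s:ℂ) * ((2⁻¹:ℂ) * ((-2 * z.im : ℝ) : ℂ)) = (((-s) * z.im : ℝ) : ℂ) := by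
      push_cast; ring
    rw [e1, e2]
    refine Matrix.PosDef.posSemidef_add (WeylAux.psd_smul hPSD ?_)
      (WeylAux.posdef_smul hTpd ?_)
    · rw [show (2⁻¹:ℂ) = ((2⁻¹:ℝ):ℂ) by push_cast; ring]
      exact Complex.zero_le_real.mpr (by norm_num)
    · exact Complex.zero_lt_real.mpr hpos
  · -- x0 < c
    have hk := key x0 c hgt.le
    rw [hGx0] at hk
    have hTpd := posdefT x0 c hgt
    have h2 : (2:ℂ) • matIm M = (U c)ᴴ * K * U c
        - ((-2 * z.im : ℝ) : ℂ) • ∫ x in Ioc x0 c, (U x)ᴴ * A x * U x := by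
      rw [← hk]; abel
    have hmi : matIm M = (2⁻¹:ℂ) • ((U c)ᴴ * K * U c)
        + (-((2⁻¹:ℂ) * ((-2 * z.im : ℝ) : ℂ))) • ∫ x in Ioc x0 c, (U x)ᴴ * A x * U x := by
      calc matIm M = (2⁻¹:ℂ) • ((2:ℂ) • matIm M) := by rw [smul_smul]; norm_num
        _ = _ := by
          rw [h2, smul_sub, smul_smul, neg_smul, sub_eq_add_neg]
    have hpos : (0:ℝ) < s * z.im := by
      rcases lt_or_gt_of_ne hz with hzneg | hzpos
      · have hprod : 0 < (c - x0) * z.im → False := by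
          intro h
          nlinarith [mul_neg_of_pos_of_neg (show (0:ℝ) < c - x0 by linarith) hzneg]
        have hprod2 : (c - x0) * z.im < 0 :=
          mul_neg_of_pos_of_neg (by linarith) hzneg
        rw [hs, Real.sign_of_neg hprod2]; linarith
      · have hprod : 0 < (c - x0) * z.im := mul_pos (by linarith) hzpos
        rw [hs, Real.sign_of_pos hprod]; linarith
    rw [smul_real, hmi, smul_add, smul_smul, smul_smul]
    have e1 : ((s:ℂ) * (2⁻¹:ℂ)) • ((U c)ᴴ * K * U c)
        = (2⁻¹:ℂ) • ((s : ℝ) • ((U c)ᴴ * K * U c)) := by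
      rw [smul_real s, smul_smul]; ring_nf
    have e2 : (s:ℂ) * (-((2⁻¹:ℂ) * ((-2 * z.im : ℝ) : ℂ))) = ((s * z.im : ℝ) : ℂ) := by
      push_cast; ring
    rw [e1, e2]
    refine Matrix.PosDef.posSemidef_add (WeylAux.psd_smul hPSD ?_)
      (WeylAux.posdef_smul hTpd ?_)
    · rw [show (2⁻¹:ℂ) = ((2⁻¹:ℝ):ℂ) by push_cast; ring]
      exact Complex.zero_le_real.mpr (by norm_num)
    · exact Complex.zero_lt_real.mpr hpos
end
end

section
/- Linear fractional transformation law for Weyl-Titchmarsh matrices under change of boundary data (Lemma 2.9): Assume Hypothesis 2.1 and let α, β, γ ∈ ℂ^{m×2m} each satisfy ρρ* = I_m and ρJρ* = 0. Fix z ∈ ℂ, x_0 ∈ ℝ, c ≠ x_0. Let Ψ_α(z,·) and Ψ_γ(z,·) be the 2m×2m solutions of the Hamiltonian system with Ψ_α(z,x_0) = (α* Jα*) and Ψ_γ(z,x_0) = (γ* Jγ*), partitioned as (Θ_α Φ_α) and (Θ_γ Φ_γ). Assume β·Φ_α(z,c) and β·Φ_γ(z,c) are invertible, and set M_α = −[β·Φ_α(z,c)]^{-1}[β·Θ_α(z,c)]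 and M_γ = −[β·Φ_γ(z,c)]^{-1}[β·Θ_γ(z,c)]. Then αγ* + αJγ*·M_γ is invertible and M_α = [−αJγ* + αγ*·M_γ]·[αγ* + αJγ*·M_γ]^{-1}. -/
open MeasureTheory Matrix Filter Set
open scoped Matrix.Norms.L2Operator ComplexOrder

noncomputable section

/-! ### Auxiliary lemmas -/

lemma JmJm (m : ℕ) : Jm m * Jm m = -1 := by
  simp only [Jm, Matrix.fromBlocks_multiply]
  rw [← Matrix.fromBlocks_one, Matrix.fromBlocks_neg]
  simp

lemma JmH (m : ℕ) : (Jm m)ᴴ = -(Jm m) := by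
  simp only [Jm, Matrix.fromBlocks_conjTranspose, Matrix.fromBlocks_neg]
  simp

lemma Jm_mul_neg_Jm (m : ℕ) : Jm m * -(Jm m) = 1 := by
  rw [mul_neg, JmJm]; simp

lemma Jm_isUnit (m : ℕ) : IsUnit (Jm m) :=
  ⟨⟨Jm m, -(Jm m), Jm_mul_neg_Jm m, by rw [neg_mul, JmJm]; simp⟩, rfl⟩

lemma bdry_id {m : ℕ} (γ : Matrix (Fin m) (Fin m ⊕ Fin m) ℂ) (hγ : IsBdry m γ) :
    γᴴ * γ * Jm m + Jm m * (γᴴ * γ) = Jm m := by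
  obtain ⟨h0, h2⟩ := hγ
  set U : DMat2 m := Matrix.fromCols γᴴ (Jm m * γᴴ) with hU
  have hUH : Uᴴ = Matrix.fromRows γ (-(γ * Jm m)) := by
    rw [hU, Matrix.conjTranspose_fromCols_eq_fromRows_conjTranspose,
      Matrix.conjTranspose_mul, Matrix.conjTranspose_conjTranspose, JmH, Matrix.mul_neg]
  have h1 : Uᴴ * Jm m * U = Jm m := by
    rw [hUH, Matrix.fromRows_mul, hU, Matrix.fromRows_mul_fromCols]
    have b12 : γ * Jm m * (Jm m * γᴴ) = -1 := by
      rw [← Matrix.mul_assoc, Matrix.mul_assoc γ (Jm m) (Jm m), JmJm]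
      simp [h0]
    have b21 : -(γ * Jm m) * Jm m * γᴴ = 1 := by
      rw [Matrix.neg_mul, Matrix.mul_assoc γ (Jm m) (Jm m), JmJm]
      simp [h0]
    have b22 : -(γ * Jm m) * Jm m * (Jm m * γᴴ) = 0 := by
      rw [Matrix.neg_mul, Matrix.mul_assoc γ (Jm m) (Jm m), JmJm]
      simp only [Matrix.mul_neg, Matrix.mul_one, neg_neg, Matrix.neg_mul]
      rw [← Matrix.mul_assoc, h2]
    rw [h2, b12, b21, b22, Jm]
  have hright : U * (-(Jm m) * Uᴴ * Jm m) = 1 := by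
    apply mul_eq_one_comm.mp
    rw [Matrix.mul_assoc, Matrix.mul_assoc, ← Matrix.mul_assoc Uᴴ, h1, Matrix.neg_mul, JmJm]
    simp
  have h4 : U * (Jm m * Uᴴ) = Jm m := by
    have h5 : U * (-(Jm m) * (Uᴴ * Jm m)) * -(Jm m) = -(Jm m) := by
      have : U * (-(Jm m) * (Uᴴ * Jm m)) = 1 := by
        rw [← hright]; simp only [Matrix.mul_assoc]
      rw [this, one_mul]
    have h6 : U * (-(Jm m) * Uᴴ) = -(Jm m) := by
      have e : U * (-(Jm m) * (Uᴴ * Jm m)) * -(Jm m) = U * (-(Jm m) * Uᴴ) := by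
        simp only [Matrix.mul_assoc, Jm_mul_neg_Jm, Matrix.mul_one]
      rw [← e, h5]
    have h7 : -(U * (Jm m * Uᴴ)) = -(Jm m) := by
      rw [← h6]; simp only [Matrix.neg_mul, Matrix.mul_neg]
    exact neg_injective h7
  have hexp : Jm m * Uᴴ = Matrix.fromRows (γ * Jm m) γ := by
    rw [hUH]
    nth_rewrite 1 [Jm]
    rw [Matrix.fromBlocks_mul_fromRows]
    simp
  rw [hexp, hU, Matrix.fromCols_mul_fromRows] at h4
  simpa only [Matrix.mul_assoc] using h4

lemma bdry_id2 {m : ℕ} (γ : Matrix (Fin m) (Fin m ⊕ Fin m) ℂ) (hγ : IsBdry m γ) :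
    γᴴ * γ - Jm m * (γᴴ * (γ * Jm m)) = 1 := by
  have idγ := bdry_id γ hγ
  have h := congrArg (· * -(Jm m)) idγ
  simp only [Matrix.add_mul, Matrix.mul_assoc, Jm_mul_neg_Jm, Matrix.mul_one,
    Matrix.mul_neg] at h
  rw [JmJm] at h
  simp only [Matrix.mul_neg, Matrix.mul_one, neg_neg, neg_add_rev] at h
  rw [sub_eq_add_neg, add_comm]
  exact h

lemma ST_id1 {m : ℕ} (α γ : Matrix (Fin m) (Fin m ⊕ Fin m) ℂ)
    (hα : IsBdry m α) (hγ : IsBdry m γ) :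
    (γ * αᴴ)ᴴ * (γ * αᴴ) + (γ * Jm m * αᴴ)ᴴ * (γ * Jm m * αᴴ) = 1 := by
  have idγ2 := bdry_id2 γ hγ
  have key : α * ((γᴴ * γ - Jm m * (γᴴ * (γ * Jm m))) * αᴴ) = 1 := by
    rw [idγ2, Matrix.one_mul]; exact hα.1
  rw [Matrix.sub_mul, Matrix.mul_sub] at key
  rw [← key]
  simp only [Matrix.conjTranspose_mul, Matrix.conjTranspose_conjTranspose]
  rw [JmH]
  simp only [Matrix.neg_mul, Matrix.mul_neg, neg_neg, Matrix.mul_assoc, sub_eq_add_neg]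

lemma ST_id2 {m : ℕ} (α γ : Matrix (Fin m) (Fin m ⊕ Fin m) ℂ)
    (hα : IsBdry m α) (hγ : IsBdry m γ) :
    (γ * αᴴ)ᴴ * (γ * Jm m * αᴴ) = (γ * Jm m * αᴴ)ᴴ * (γ * αᴴ) := by
  have idγ := bdry_id γ hγ
  have key : α * ((γᴴ * γ * Jm m + Jm m * (γᴴ * γ)) * αᴴ) = 0 := by
    rw [idγ, ← Matrix.mul_assoc]; exact hα.2
  rw [Matrix.add_mul, Matrix.mul_add] at key
  simp only [Matrix.conjTranspose_mul, Matrix.conjTranspose_conjTranspose]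
  rw [JmH]
  simp only [Matrix.neg_mul, Matrix.mul_neg, Matrix.mul_assoc]
  exact eq_neg_of_add_eq_zero_left (by simpa only [Matrix.mul_assoc] using key)

lemma lft_algebra {m : ℕ} (S T Mγ Mα : DMat m)
    (hid1 : Sᴴ * S + Tᴴ * T = 1) (hid2 : Sᴴ * T = Tᴴ * S)
    (hMα : (S - Mγ * T) * Mα = Mγ * S + T) :
    IsUnit (Sᴴ - Tᴴ * Mγ) ∧ Mα = (Tᴴ + Sᴴ * Mγ) * (Sᴴ - Tᴴ * Mγ)⁻¹ := by
  have hR : (Sᴴ - Tᴴ * Mγ) * (S + T * Mα) = 1 := by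
    calc (Sᴴ - Tᴴ * Mγ) * (S + T * Mα)
        = Sᴴ * S + (Sᴴ * T) * Mα - Tᴴ * (Mγ * S) - Tᴴ * (Mγ * (T * Mα)) := by noncomm_ring
      _ = Sᴴ * S + (Tᴴ * S) * Mα - Tᴴ * (Mγ * S) - Tᴴ * (Mγ * (T * Mα)) := by rw [hid2]
      _ = Sᴴ * S + Tᴴ * ((S - Mγ * T) * Mα - Mγ * S) := by noncomm_ring
      _ = Sᴴ * S + Tᴴ * (Mγ * S + T - Mγ * S) := by rw [hMα]
      _ = Sᴴ * S + Tᴴ * T := by noncomm_ring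
      _ = 1 := hid1
  have hunit : IsUnit (Sᴴ - Tᴴ * Mγ) := by
    apply (Matrix.isUnit_iff_isUnit_det _).2
    have h := congrArg Matrix.det hR
    rw [Matrix.det_mul, Matrix.det_one] at h
    exact IsUnit.of_mul_eq_one _ h
  have hinv : (Sᴴ - Tᴴ * Mγ)⁻¹ = S + T * Mα := Matrix.inv_eq_right_inv hR
  refine ⟨hunit, ?_⟩
  rw [hinv]
  have h1 : Mα = (Sᴴ * S + Tᴴ * T) * Mα := by rw [hid1, Matrix.one_mul]
  have e3 : Mα - (Tᴴ + Sᴴ * Mγ) * (S + T * Mα) = 0 := by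
    calc Mα - (Tᴴ + Sᴴ * Mγ) * (S + T * Mα)
        = (Sᴴ * S + Tᴴ * T) * Mα - (Tᴴ + Sᴴ * Mγ) * (S + T * Mα) := by rw [← h1]
      _ = Sᴴ * ((S - Mγ * T) * Mα) - Sᴴ * (Mγ * S) - Tᴴ * S := by noncomm_ring
      _ = Sᴴ * (Mγ * S + T) - Sᴴ * (Mγ * S) - Tᴴ * S := by rw [hMα]
      _ = Sᴴ * T - Tᴴ * S := by noncomm_ring
      _ = 0 := by rw [hid2, sub_self]
  exact sub_eq_zero.mp e3

lemma gronwall_zero (r k : ℝ → ℝ) (a b : ℝ) (hab : a ≤ b)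
    (hr : Continuous r) (hr0 : ∀ t, 0 ≤ r t) (hk0 : ∀ t, 0 ≤ k t)
    (hkInt : ∀ p q : ℝ, IntervalIntegrable k volume p q)
    (hkrInt : ∀ p q : ℝ, IntervalIntegrable (fun t => k t * r t) volume p q)
    (hineq : ∀ x y, a ≤ x → x ≤ y → y ≤ b → r y ≤ r x + ∫ t in x..y, k t * r t)
    (ha : r a = 0) : r b = 0 := by
  set S : Set ℝ := {t | t ∈ Icc a b ∧ ∀ s ∈ Icc a t, r s = 0} with hS
  have haS : a ∈ S := by
    refine ⟨⟨le_refl a, hab⟩, fun s hs => ?_⟩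
    have : s = a := le_antisymm hs.2 hs.1
    rw [this, ha]
  have hbdd : BddAbove S := ⟨b, fun t ht => ht.1.2⟩
  set u := sSup S with hu
  have hau : a ≤ u := le_csSup hbdd haS
  have hub : u ≤ b := csSup_le ⟨a, haS⟩ (fun t ht => ht.1.2)
  have hru : ∀ s ∈ Icc a u, r s = 0 := by
    intro s hs
    rcases eq_or_lt_of_le hs.2 with h | h
    · rw [h]
      rcases eq_or_lt_of_le hau with h2 | h2
      · rw [← h2, ha]
      · have h3 : ∀ᶠ t in nhdsWithin u (Iio u), r t = 0 := by
          have h4 : Ioo a u ∈ nhdsWithin u (Iio u) := by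
            apply mem_nhdsWithin.mpr
            exact ⟨Ioi a, isOpen_Ioi, h2, fun t ht => ⟨ht.1, ht.2⟩⟩
          filter_upwards [h4] with t ht
          obtain ⟨w, hwS, hw⟩ := exists_lt_of_lt_csSup ⟨a, haS⟩ ht.2
          exact hwS.2 t ⟨le_of_lt ht.1, le_of_lt hw⟩
        have h5 : Tendsto r (nhdsWithin u (Iio u)) (nhds (r u)) :=
          (hr.tendsto u).mono_left nhdsWithin_le_nhds
        have h6 : Tendsto r (nhdsWithin u (Iio u)) (nhds 0) :=
          Tendsto.congr' (h3.mono fun t ht => ht.symm) tendsto_const_nhds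
        exact tendsto_nhds_unique h5 h6
    · obtain ⟨w, hwS, hw⟩ := exists_lt_of_lt_csSup ⟨a, haS⟩ h
      exact hwS.2 s ⟨hs.1, le_of_lt hw⟩
  by_contra hrb
  have hub' : u < b := lt_of_le_of_ne hub (fun h => hrb (h ▸ hru u ⟨hau, le_refl u⟩))
  have hKcont : Continuous (fun t => ∫ s in u..t, k s) :=
    intervalIntegral.continuous_primitive hkInt u
  obtain ⟨δ, hδpos, hδ⟩ := Metric.continuousAt_iff.mp (hKcont.continuousAt (x := u))
      (1/2) (by norm_num)
  set v := min b (u + δ/2) with hv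
  have huv : u < v := lt_min hub' (by linarith)
  have hvb : v ≤ b := min_le_left _ _
  have hKv : (∫ s in u..v, k s) < 1/2 := by
    have : dist v u < δ := by
      rw [Real.dist_eq, abs_of_pos (by linarith)]
      have : v ≤ u + δ/2 := min_le_right _ _
      linarith
    have h7 := hδ this
    rw [intervalIntegral.integral_same] at h7
    rw [Real.dist_eq, sub_zero] at h7
    exact lt_of_le_of_lt (le_abs_self _) h7
  obtain ⟨sm, hsmem, hsmax⟩ := isCompact_Icc.exists_isMaxOn (nonempty_Icc.mpr (le_of_lt huv))
    hr.continuousOn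
  set Mx := r sm with hMx
  have hMx0 : 0 ≤ Mx := hr0 sm
  have hrv : ∀ s ∈ Icc u v, r s = 0 := by
    have hMxle : Mx ≤ (1/2) * Mx := by
      have h1 := hineq u sm (hau) hsmem.1 (le_trans hsmem.2 hvb)
      rw [hru u ⟨hau, le_refl u⟩, zero_add] at h1
      have h2 : (∫ t in u..sm, k t * r t) ≤ ∫ t in u..sm, k t * Mx := by
        apply intervalIntegral.integral_mono_on hsmem.1 (hkrInt u sm)
          ((hkInt u sm).mul_const Mx)
        intro x hx
        exact mul_le_mul_of_nonneg_left (hsmax ⟨hx.1, le_trans hx.2 hsmem.2⟩) (hk0 x)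
      have h3 : (∫ t in u..sm, k t * Mx) = (∫ t in u..sm, k t) * Mx := by
        rw [intervalIntegral.integral_mul_const]
      have h4 : (∫ t in u..sm, k t) ≤ ∫ t in u..v, k t := by
        rw [← intervalIntegral.integral_add_adjacent_intervals (hkInt u sm) (hkInt sm v)]
        have : 0 ≤ ∫ t in sm..v, k t :=
          intervalIntegral.integral_nonneg hsmem.2 (fun t _ => hk0 t)
        linarith
      calc Mx ≤ (∫ t in u..sm, k t) * Mx := by rw [← h3]; linarith
        _ ≤ (1/2) * Mx := by
            apply mul_le_mul_of_nonneg_right _ hMx0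
            linarith
    have hMxz : Mx = 0 := by linarith [hMx0, hMxle]
    intro s hs
    exact le_antisymm (hMxz ▸ hsmax hs) (hr0 s)
  have hvS : v ∈ S := by
    refine ⟨⟨le_trans hau (le_of_lt huv), hvb⟩, fun s hs => ?_⟩
    rcases le_or_gt s u with h | h
    · exact hru s ⟨hs.1, h⟩
    · exact hrv s ⟨le_of_lt h, hs.2⟩
  have : v ≤ u := le_csSup hbdd hvS
  linarith

lemma gronwall_zero' (r k : ℝ → ℝ) (a b : ℝ) (hba : b ≤ a)
    (hr : Continuous r) (hr0 : ∀ t, 0 ≤ r t) (hk0 : ∀ t, 0 ≤ k t)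
    (hkInt : ∀ p q : ℝ, IntervalIntegrable k volume p q)
    (hkrInt : ∀ p q : ℝ, IntervalIntegrable (fun t => k t * r t) volume p q)
    (hineq : ∀ x y, b ≤ x → x ≤ y → y ≤ a → r x ≤ r y + ∫ t in x..y, k t * r t)
    (ha : r a = 0) : r b = 0 := by
  have key := gronwall_zero (fun t => r (-t)) (fun t => k (-t)) (-a) (-b) (by linarith)
    (hr.comp continuous_neg) (fun t => hr0 (-t)) (fun t => hk0 (-t))
    (fun p q => by simpa using (IntervalIntegrable.iff_comp_neg (f := k) (by simp)).mp (hkInt (-p) (-q)))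
    (fun p q => by simpa using (IntervalIntegrable.iff_comp_neg (f := fun t => k t * r t) (a := -p) (b := -q) enorm_ne_top).mp (hkrInt (-p) (-q)))
    (fun x y hx hxy hy => by
      rw [intervalIntegral.integral_comp_neg (fun t => k t * r t)]
      exact hineq (-y) (-x) (by linarith) (by linarith) (by linarith))
    (by simpa using ha)
  simpa using key

lemma MeasureTheory.LocallyIntegrable.toII {E : Type*} [NormedAddCommGroup E] {f : ℝ → E}
    (h : LocallyIntegrable f volume) (a b : ℝ) : IntervalIntegrable f volume a b := by
  rw [intervalIntegrable_iff]
  exact (h.integrableOn_isCompact isCompact_uIcc).mono_set uIoc_subset_uIcc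

lemma MeasureTheory.LocallyIntegrable.clm_comp {E F : Type*} [NormedAddCommGroup E]
    [NormedSpace ℂ E] [NormedAddCommGroup F] [NormedSpace ℂ F] (L : E →L[ℂ] F) {f : ℝ → E}
    (h : LocallyIntegrable f volume) : LocallyIntegrable (fun x => L (f x)) volume := by
  rw [MeasureTheory.locallyIntegrable_iff] at h ⊢
  exact fun K hK => L.integrable_comp (h K hK)

lemma ham_uniqueness (m : ℕ) (A B : ℝ → DMat2 m)
    (hA : LocallyIntegrable A volume) (hB : LocallyIntegrable B volume) (z : ℂ)
    (Ψ Φ : ℝ → DMat2 m) (hΨ : IsHamMatSol m A B z Ψ) (hΦ : IsHamMatSol m A B z Φ)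
    (x0 : ℝ) (h0 : Ψ x0 = Φ x0) (c : ℝ) : Ψ c = Φ c := by
  obtain ⟨Ψ', hΨ'loc, hΨint, hΨode⟩ := hΨ
  obtain ⟨Φ', hΦ'loc, hΦint, hΦode⟩ := hΦ
  set D : ℝ → DMat2 m := fun x => Ψ x - Φ x with hD
  set D' : ℝ → DMat2 m := fun x => Ψ' x - Φ' x with hD'
  have hD'loc : LocallyIntegrable D' volume := hΨ'loc.sub hΦ'loc
  have hDint : ∀ a b : ℝ, D b = D a + ∫ t in a..b, D' t := by
    intro a b
    have : (∫ t in a..b, D' t) = (∫ t in a..b, Ψ' t) - ∫ t in a..b, Φ' t :=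
      intervalIntegral.integral_sub (hΨ'loc.toII a b) (hΦ'loc.toII a b)
    rw [this]
    simp only [hD, hD', this, hΨint a b, hΦint a b]
    abel
  have hD0 : D x0 = 0 := by simp [hD, h0]
  set M : ℝ → DMat2 m := fun x => z • A x + B x with hM
  set N : ℝ → DMat2 m := fun x => -(Jm m) * M x with hN
  have hMloc : LocallyIntegrable M volume := by
    have h1 : LocallyIntegrable (z • A) volume := hA.smul z
    exact h1.add hB
  have hNloc : LocallyIntegrable N volume := by
    have h5 := hMloc.clm_comp (LinearMap.toContinuousLinearMap (LinearMap.mulLeft ℂ (-(Jm m))))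
    have : N = fun x => (LinearMap.toContinuousLinearMap (LinearMap.mulLeft ℂ (-(Jm m)))) (M x) :=
      funext fun x => by simp [hN]
    rw [this]; exact h5
  have hD'eq : ∀ᵐ x : ℝ, D' x = N x * D x := by
    filter_upwards [hΨode, hΦode] with x h1 h2
    have h3 : Jm m * D' x = M x * D x := by
      simp only [hD, hD', Matrix.mul_sub, h1, h2, hM]
    have h4 : D' x = -(Jm m) * (Jm m * D' x) := by
      rw [← Matrix.mul_assoc, Matrix.neg_mul, JmJm]
      simp
    rw [h4, h3, hN, Matrix.mul_assoc]
  set r : ℝ → ℝ := fun t => ‖D t‖ with hr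
  set k : ℝ → ℝ := fun t => ‖N t‖ with hk
  have hDcont : Continuous D := by
    have h1 : Continuous (fun b => D x0 + ∫ t in x0..b, D' t) :=
      continuous_const.add (intervalIntegral.continuous_primitive (hD'loc.toII) x0)
    have h2 : D = fun b => D x0 + ∫ t in x0..b, D' t := funext fun b => hDint x0 b
    rw [h2]; exact h1
  have hrcont : Continuous r := hDcont.norm
  have hkInt : ∀ p q : ℝ, IntervalIntegrable k volume p q := fun p q => (hNloc.toII p q).norm
  have hkrInt : ∀ p q : ℝ, IntervalIntegrable (fun t => k t * r t) volume p q := fun p q =>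
    (hkInt p q).mul_continuousOn hrcont.continuousOn
  have hbound : ∀ᵐ t : ℝ, ‖D' t‖ ≤ k t * r t := by
    filter_upwards [hD'eq] with t ht
    rw [ht]
    exact norm_mul_le _ _
  have hstep : ∀ x y : ℝ, x ≤ y → (‖∫ t in x..y, D' t‖ : ℝ) ≤ ∫ t in x..y, k t * r t := by
    intro x y hxy
    calc ‖∫ t in x..y, D' t‖ ≤ ∫ t in x..y, ‖D' t‖ :=
          intervalIntegral.norm_integral_le_integral_norm hxy
      _ ≤ ∫ t in x..y, k t * r t :=
          intervalIntegral.integral_mono_ae hxy ((hD'loc.toII x y).norm) (hkrInt x y) hbound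
  have hrc : r c = 0 := by
    rcases le_total x0 c with hxc | hxc
    · apply gronwall_zero r k x0 c hxc hrcont (fun t => norm_nonneg _) (fun t => norm_nonneg _)
        hkInt hkrInt _ (by simp [hr, hD0])
      intro x y hx hxy hy
      calc r y = ‖D x + ∫ t in x..y, D' t‖ := by rw [hr, ← hDint x y]
        _ ≤ r x + ‖∫ t in x..y, D' t‖ := norm_add_le _ _
        _ ≤ r x + ∫ t in x..y, k t * r t := by linarith [hstep x y hxy]
    · apply gronwall_zero' r k x0 c hxc hrcont (fun t => norm_nonneg _) (fun t => norm_nonneg _)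
        hkInt hkrInt _ (by simp [hr, hD0])
      intro x y hx hxy hy
      calc r x = ‖D y + ∫ t in y..x, D' t‖ := by rw [hr, ← hDint y x]
        _ ≤ r y + ‖∫ t in y..x, D' t‖ := norm_add_le _ _
        _ = r y + ‖∫ t in x..y, D' t‖ := by rw [intervalIntegral.integral_symm, norm_neg]
        _ ≤ r y + ∫ t in x..y, k t * r t := by linarith [hstep x y hxy]
  have h8 : D c = 0 := norm_eq_zero.mp hrc
  exact sub_eq_zero.mp h8

lemma ham_sol_mul (m : ℕ) (A B : ℝ → DMat2 m) (z : ℂ) (Ψ : ℝ → DMat2 m)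
    (hΨ : IsHamMatSol m A B z Ψ) (C : DMat2 m) :
    IsHamMatSol m A B z (fun x => Ψ x * C) := by
  obtain ⟨Ψ', hloc, hint, hode⟩ := hΨ
  set L : DMat2 m →L[ℂ] DMat2 m :=
    LinearMap.toContinuousLinearMap (LinearMap.mulRight ℂ C) with hL
  have hLapp : ∀ X : DMat2 m, L X = X * C := fun X => by simp [hL]
  refine ⟨fun x => Ψ' x * C, ?_, ?_, ?_⟩
  · have h1 := hloc.clm_comp L
    have : (fun x => Ψ' x * C) = fun x => L (Ψ' x) := funext fun x => (hLapp _).symm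
    rw [this]; exact h1
  · intro a b
    have h2 : (∫ t in a..b, Ψ' t * C) = (∫ t in a..b, Ψ' t) * C := by
      rw [← hLapp]
      rw [← L.intervalIntegral_comp_comm (hloc.toII a b)]
      simp_rw [hLapp]
    show Ψ b * C = Ψ a * C + ∫ t in a..b, Ψ' t * C
    rw [h2, hint a b, Matrix.add_mul]
  · filter_upwards [hode] with x hx
    rw [← Matrix.mul_assoc, hx, Matrix.mul_assoc]

lemma init_rel {m : ℕ} (α γ : Matrix (Fin m) (Fin m ⊕ Fin m) ℂ) (hγ : IsBdry m γ) :
    initΨ m γ * Matrix.fromBlocks (γ * αᴴ) (γ * Jm m * αᴴ) (-(γ * Jm m * αᴴ)) (γ * αᴴ)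
      = initΨ m α := by
  rw [initΨ, initΨ, Matrix.fromCols_mul_fromBlocks]
  have c1 : γᴴ * (γ * αᴴ) + Jm m * γᴴ * -(γ * Jm m * αᴴ) = αᴴ := by
    have h := congrArg (· * αᴴ) (bdry_id2 γ hγ)
    simp only [Matrix.sub_mul, Matrix.one_mul, Matrix.mul_assoc] at h
    simp only [Matrix.mul_neg, Matrix.mul_assoc]
    rw [← sub_eq_add_neg]
    exact h
  have c2 : γᴴ * (γ * Jm m * αᴴ) + Jm m * γᴴ * (γ * αᴴ) = Jm m * αᴴ := by
    have h := congrArg (· * αᴴ) (bdry_id γ hγ)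
    simp only [Matrix.add_mul, Matrix.mul_assoc] at h
    simp only [Matrix.mul_assoc]
    exact h
  rw [c1, c2]


theorem statement12 (m : ℕ) (hm : 1 ≤ m) (A B : ℝ → DMat2 m) (h21 : Hyp21 m A B)
    (z : ℂ) (x0 c : ℝ) (hc : c ≠ x0)
    (α β γ : Matrix (Fin m) (Fin m ⊕ Fin m) ℂ)
    (hα : IsBdry m α) (hβ : IsBdry m β) (hγ : IsBdry m γ)
    (Ψα Ψγ : ℝ → DMat2 m)
    (hΨα : IsHamMatSol m A B z Ψα) (hΨα0 : Ψα x0 = initΨ m α)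
    (hΨγ : IsHamMatSol m A B z Ψγ) (hΨγ0 : Ψγ x0 = initΨ m γ)
    (hβΦα : IsUnit (β * Matrix.toCols₂ (Ψα c)))
    (hβΦγ : IsUnit (β * Matrix.toCols₂ (Ψγ c)))
    (Mα Mγ : DMat m)
    (hMα : Mα = -((β * Matrix.toCols₂ (Ψα c))⁻¹ * (β * Matrix.toCols₁ (Ψα c))))
    (hMγ : Mγ = -((β * Matrix.toCols₂ (Ψγ c))⁻¹ * (β * Matrix.toCols₁ (Ψγ c)))) :
    IsUnit (α * γᴴ + α * Jm m * γᴴ * Mγ) ∧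
      Mα = (-(α * Jm m * γᴴ) + α * γᴴ * Mγ) * (α * γᴴ + α * Jm m * γᴴ * Mγ)⁻¹ := by
  set SS : DMat m := γ * αᴴ with hSSdef
  set TT : DMat m := γ * Jm m * αᴴ with hTTdef
  set C : DMat2 m := Matrix.fromBlocks SS TT (-TT) SS with hCdef
  have hsol := ham_sol_mul m A B z Ψγ hΨγ C
  have hinit : Ψα x0 = Ψγ x0 * C := by
    rw [hΨα0, hΨγ0, hCdef, hSSdef, hTTdef]
    exact (init_rel α γ hγ).symm
  have hc : Ψα c = Ψγ c * C :=
    ham_uniqueness m A B h21.locA h21.locB z Ψα _ hΨα hsol x0 hinit c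
  have hcol1 : Matrix.toCols₁ (Ψα c)
      = Matrix.toCols₁ (Ψγ c) * SS + Matrix.toCols₂ (Ψγ c) * (-TT) := by
    conv_lhs => rw [hc, ← Matrix.fromCols_toCols (Ψγ c)]
    rw [hCdef, Matrix.fromCols_mul_fromBlocks, Matrix.toCols₁_fromCols]
  have hcol2 : Matrix.toCols₂ (Ψα c)
      = Matrix.toCols₁ (Ψγ c) * TT + Matrix.toCols₂ (Ψγ c) * SS := by
    conv_lhs => rw [hc, ← Matrix.fromCols_toCols (Ψγ c)]
    rw [hCdef, Matrix.fromCols_mul_fromBlocks, Matrix.toCols₂_fromCols]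
  set P : DMat m := β * Matrix.toCols₂ (Ψγ c) with hPdef
  have hPdet : IsUnit P.det := (Matrix.isUnit_iff_isUnit_det P).mp hβΦγ
  have hβΘγ : β * Matrix.toCols₁ (Ψγ c) = -(P * Mγ) := by
    rw [hMγ, Matrix.mul_neg, neg_neg, Matrix.mul_nonsing_inv_cancel_left _ _ hPdet]
  have hPK : β * Matrix.toCols₂ (Ψα c) = P * (SS - Mγ * TT) := by
    rw [hcol2, Matrix.mul_add,
      ← Matrix.mul_assoc β (Matrix.toCols₁ (Ψγ c)) TT,
      ← Matrix.mul_assoc β (Matrix.toCols₂ (Ψγ c)) SS, hβΘγ, ← hPdef]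
    noncomm_ring
  have hKunit : IsUnit (SS - Mγ * TT) := by
    have h1 : IsUnit ((β * Matrix.toCols₂ (Ψα c)).det) :=
      (Matrix.isUnit_iff_isUnit_det _).mp hβΦα
    rw [hPK, Matrix.det_mul] at h1
    exact (Matrix.isUnit_iff_isUnit_det _).2 (isUnit_of_mul_isUnit_right h1)
  have hKdet : IsUnit (SS - Mγ * TT).det := (Matrix.isUnit_iff_isUnit_det _).mp hKunit
  have hPΘα : β * Matrix.toCols₁ (Ψα c) = -(P * (Mγ * SS + TT)) := by
    rw [hcol1, Matrix.mul_add,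
      ← Matrix.mul_assoc β (Matrix.toCols₁ (Ψγ c)) SS,
      ← Matrix.mul_assoc β (Matrix.toCols₂ (Ψγ c)) (-TT), hβΘγ, ← hPdef]
    noncomm_ring
  have hMαK : (SS - Mγ * TT) * Mα = Mγ * SS + TT := by
    rw [hMα, hPK, hPΘα, Matrix.mul_inv_rev]
    simp only [Matrix.mul_neg, neg_neg]
    rw [Matrix.mul_assoc (SS - Mγ * TT)⁻¹ P⁻¹ _,
      Matrix.nonsing_inv_mul_cancel_left _ _ hPdet,
      Matrix.mul_nonsing_inv_cancel_left _ _ hKdet]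
  have halg := lft_algebra SS TT Mγ Mα (ST_id1 α γ hα hγ) (ST_id2 α γ hα hγ) hMαK
  have hSH : SSᴴ = α * γᴴ := by
    rw [hSSdef, Matrix.conjTranspose_mul, Matrix.conjTranspose_conjTranspose]
  have hTH : TTᴴ = -(α * Jm m * γᴴ) := by
    rw [hTTdef, Matrix.conjTranspose_mul, Matrix.conjTranspose_mul,
      Matrix.conjTranspose_conjTranspose, JmH]
    simp only [Matrix.mul_neg, Matrix.neg_mul, Matrix.mul_assoc]
  have e1 : α * γᴴ + α * Jm m * γᴴ * Mγ = SSᴴ - TTᴴ * Mγ := by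
    rw [hSH, hTH]; noncomm_ring
  have e2 : -(α * Jm m * γᴴ) + α * γᴴ * Mγ = TTᴴ + SSᴴ * Mγ := by
    rw [hSH, hTH]
  rw [e1, e2]
  exact halg
end
end
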